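/- A surface-conforming Q-tensor Q = q̂ + β(n⊗n − (1/2)P) (as above) is uniaxial if and only if (2·Tr(q̂²) = 9β²) or q̂ = 0. -/

import Mathlib

open Matrix

theorem stmt14 (n : Fin 3 → ℝ) (hn : n ⬝ᵥ n = 1)
    (q : Matrix (Fin 3) (Fin 3) ℝ) (hq : qᵀ = q) (hqn : q.mulVec n = 0)
    (htr : q.trace = 0) (β : ℝ)
    (Q : Matrix (Fin 3) (Fin 3) ℝ)
    (hQ : Q = q + β • (vecMulVec n n
        - (1 / 2 : ℝ) • ((1 : Matrix (Fin 3) (Fin 3) ℝ) - vecMulVec n n))) :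
    ((Q ^ 2).trace) ^ 3 = 6 * ((Q ^ 3).trace) ^ 2 ↔
      (2 * (q ^ 2).trace = 9 * β ^ 2 ∨ q = 0) := by
  set M : Matrix (Fin 3) (Fin 3) ℝ := vecMulVec n n with hM
  -- basic matrix facts
  have hMM : M * M = M := by
    ext i j
    simp only [hM, mul_apply, vecMulVec_apply]
    have hn' : n 0 * n 0 + n 1 * n 1 + n 2 * n 2 = 1 := by
      simpa [dotProduct, Fin.sum_univ_three] using hn
    rw [Fin.sum_univ_three]
    linear_combination (n i * n j) * hn'
  have hqM : q * M = 0 := by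
    ext i j
    have h0 : q.mulVec n i = 0 := by rw [hqn]; rfl
    simp only [mul_apply, vecMulVec_apply, Matrix.zero_apply, hM]
    calc ∑ k, q i k * (n k * n j) = (∑ k, q i k * n k) * n j := by
          rw [Finset.sum_mul]; exact Finset.sum_congr rfl (fun k _ => by ring)
      _ = 0 := by
          have : (∑ k, q i k * n k) = q.mulVec n i := rfl
          rw [this, h0, zero_mul]
  have hMq : M * q = 0 := by
    have : (M * q)ᵀ = 0 := by
      rw [Matrix.transpose_mul, hq]
      have hMt : Mᵀ = M := by ext i j; simp [hM, vecMulVec_apply, mul_comm]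
      rw [hMt, hqM]
    calc M * q = ((M * q)ᵀ)ᵀ := by rw [Matrix.transpose_transpose]
      _ = 0 := by rw [this]; simp
  have htrM : M.trace = 1 := by
    simp only [hM, Matrix.trace, Matrix.diag, vecMulVec_apply]
    simpa [dotProduct] using hn
  -- det q = 0
  have hdet : q.det = 0 := by
    rw [← Matrix.exists_mulVec_eq_zero_iff]
    refine ⟨n, ?_, hqn⟩
    intro h
    rw [h] at hn
    simp [dotProduct] at hn
  -- trace of q^3
  have htrq3 : (q ^ 3).trace = 0 := by
    have h3 : (q ^ 3).trace = 3 * q.det := by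
      have e1 : q 0 0 + q 1 1 + q 2 2 = 0 := by
        simpa [Matrix.trace, Matrix.diag, Fin.sum_univ_three] using htr
      simp only [pow_succ, pow_zero, one_mul, Matrix.trace, Matrix.diag,
        mul_apply, Fin.sum_univ_three, Matrix.det_fin_three]
      linear_combination (3 * (q 0 0 ^ 2 + q 1 1 ^ 2 + q 2 2 ^ 2
        + 2 * q 0 1 * q 1 0 + 2 * q 0 2 * q 2 0 + 2 * q 1 2 * q 2 1)
        - (q 0 0 + q 1 1 + q 2 2) ^ 2) / 2 * e1
    rw [h3, hdet, mul_zero]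
  -- rewrite Q
  have hQ' : Q = q + (3 * β / 2) • M + (-(β / 2)) • (1 : Matrix (Fin 3) (Fin 3) ℝ) := by
    rw [hQ]
    module
  have hQ2 : Q ^ 2 = q ^ 2 + (-β) • q
      + (3 * β / 2 * (3 * β / 2) + 2 * (3 * β / 2) * (-(β / 2))) • M
      + (β / 2 * (β / 2)) • (1 : Matrix (Fin 3) (Fin 3) ℝ) := by
    rw [hQ', pow_two, pow_two]
    simp only [add_mul, mul_add, smul_mul_assoc, mul_smul_comm, hMM, hqM, hMq,
      Matrix.mul_one, Matrix.one_mul, smul_zero, smul_smul]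
    module
  have hQ3 : Q ^ 3 = q ^ 3 + (3 * (-(β / 2))) • q ^ 2 + (3 * (β / 2 * (β / 2))) • q
      + ((3 * β / 2) ^ 3 + 3 * (3 * β / 2) ^ 2 * (-(β / 2))
          + 3 * (3 * β / 2) * (β / 2) ^ 2) • M
      + (-(β / 2)) ^ 3 • (1 : Matrix (Fin 3) (Fin 3) ℝ) := by
    rw [pow_succ, hQ2, hQ']
    have hq2M : q ^ 2 * M = 0 := by rw [pow_two, Matrix.mul_assoc, hqM, Matrix.mul_zero]
    have hMq2 : M * q ^ 2 = 0 := by rw [pow_two, ← Matrix.mul_assoc, hMq, Matrix.zero_mul]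
    simp only [add_mul, mul_add, smul_mul_assoc, mul_smul_comm, hMM, hqM, hMq, hq2M,
      Matrix.mul_one, Matrix.one_mul, smul_zero, smul_smul]
    rw [← pow_two q, ← pow_succ q 2]
    module
  have htrone : (1 : Matrix (Fin 3) (Fin 3) ℝ).trace = 3 := by
    simp [Matrix.trace_one]
  have ht2 : (Q ^ 2).trace = (q ^ 2).trace + 3 / 2 * β ^ 2 := by
    rw [hQ2]
    simp only [Matrix.trace_add, Matrix.trace_smul, htrM, htrone, htr, smul_eq_mul]
    ring
  have ht3 : (Q ^ 3).trace = 3 / 4 * β ^ 3 - 3 / 2 * β * (q ^ 2).trace := by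
    rw [hQ3]
    simp only [Matrix.trace_add, Matrix.trace_smul, htrM, htrone, htr, htrq3, smul_eq_mul]
    ring
  -- q = 0 ↔ tr q² = 0
  have hsym : ∀ i j, q j i = q i j := by
    intro i j
    have := congrFun (congrFun hq i) j
    simpa [Matrix.transpose_apply] using this
  have ha : (q ^ 2).trace = q 0 0 ^ 2 + q 1 1 ^ 2 + q 2 2 ^ 2
      + 2 * q 0 1 ^ 2 + 2 * q 0 2 ^ 2 + 2 * q 1 2 ^ 2 := by
    simp only [pow_two, Matrix.trace, Matrix.diag, mul_apply, Fin.sum_univ_three]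
    rw [hsym 0 1, hsym 0 2, hsym 1 2]
    ring
  have hq0 : q = 0 ↔ (q ^ 2).trace = 0 := by
    constructor
    · intro h; rw [h]; simp
    · intro h
      rw [ha] at h
      have h00 : q 0 0 = 0 := by
        have e00 : q 0 0 ^ 2 = 0 := by
          linarith [sq_nonneg (q 0 0), sq_nonneg (q 1 1), sq_nonneg (q 2 2), sq_nonneg (q 0 1), sq_nonneg (q 0 2), sq_nonneg (q 1 2)]
        exact pow_eq_zero_iff two_ne_zero |>.mp e00
      have h11 : q 1 1 = 0 := by
        have e11 : q 1 1 ^ 2 = 0 := by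
          linarith [sq_nonneg (q 0 0), sq_nonneg (q 1 1), sq_nonneg (q 2 2), sq_nonneg (q 0 1), sq_nonneg (q 0 2), sq_nonneg (q 1 2)]
        exact pow_eq_zero_iff two_ne_zero |>.mp e11
      have h22 : q 2 2 = 0 := by
        have e22 : q 2 2 ^ 2 = 0 := by
          linarith [sq_nonneg (q 0 0), sq_nonneg (q 1 1), sq_nonneg (q 2 2), sq_nonneg (q 0 1), sq_nonneg (q 0 2), sq_nonneg (q 1 2)]
        exact pow_eq_zero_iff two_ne_zero |>.mp e22
      have h01 : q 0 1 = 0 := by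
        have e01 : q 0 1 ^ 2 = 0 := by
          linarith [sq_nonneg (q 0 0), sq_nonneg (q 1 1), sq_nonneg (q 2 2), sq_nonneg (q 0 1), sq_nonneg (q 0 2), sq_nonneg (q 1 2)]
        exact pow_eq_zero_iff two_ne_zero |>.mp e01
      have h02 : q 0 2 = 0 := by
        have e02 : q 0 2 ^ 2 = 0 := by
          linarith [sq_nonneg (q 0 0), sq_nonneg (q 1 1), sq_nonneg (q 2 2), sq_nonneg (q 0 1), sq_nonneg (q 0 2), sq_nonneg (q 1 2)]
        exact pow_eq_zero_iff two_ne_zero |>.mp e02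
      have h12 : q 1 2 = 0 := by
        have e12 : q 1 2 ^ 2 = 0 := by
          linarith [sq_nonneg (q 0 0), sq_nonneg (q 1 1), sq_nonneg (q 2 2), sq_nonneg (q 0 1), sq_nonneg (q 0 2), sq_nonneg (q 1 2)]
        exact pow_eq_zero_iff two_ne_zero |>.mp e12
      ext i j
      fin_cases i <;> fin_cases j <;> simp only [Matrix.zero_apply]
      · exact h00
      · exact h01
      · exact h02
      · exact (hsym 0 1).trans h01
      · exact h11
      · exact h12
      · exact (hsym 0 2).trans h02
      · exact (hsym 1 2).trans h12
      · exact h22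
  -- final real algebra
  rw [ht2, ht3, hq0]
  set a := (q ^ 2).trace with haa
  constructor
  · intro h
    have key : a * (2 * a - 9 * β ^ 2) ^ 2 = 0 := by linear_combination 4 * h
    rcases mul_eq_zero.mp key with h1 | h1
    · right; exact h1
    · left
      have := pow_eq_zero_iff (n := 2) (by norm_num) |>.mp h1
      linarith
  · rintro (h | h)
    · have ha' : a = 9 / 2 * β ^ 2 := by linarith
      rw [ha']; ring
    · rw [h]; ring
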